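/- Let {f_i}_{i=1}^n be a unit norm Riesz basis for ℓ₂ⁿ with bounds 0 < A ≤ B and let r ≥ 1 be a natural number. Then there exists a partition {A_1,…,A_r} of {1,…,n} with the following property: for each j, write A_j = {i_1 < i_2 < ⋯ < i_k} and let {e_{i_1},…,e_{i_k}} be the orthonormal system obtained by applying the Gram–Schmidt process to (f_{i_1},…,f_{i_k}) in this order; then for every m ∈ {1,…,k}, |⟨f_{i_m}, e_{i_m}⟩|² ≥ 1 − B⁴/(A⁴ r). -/

import Mathlib

open scoped InnerProductSpace
open Submodule
open InnerProductSpace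

/-- The Gram–Schmidt orthonormalization of a finite tuple of vectors
(applied in the order of the indices). -/
noncomputable def gramSchmidtTuple {E : Type*} [NormedAddCommGroup E]
    [InnerProductSpace ℂ E] {k : ℕ} (g : Fin k → E) : Fin k → E :=
  @InnerProductSpace.gramSchmidtNormed ℂ E _ _ _ (Fin k) _ _ Finite.to_wellFoundedLT g

section Aux

set_option linter.unusedVariables false
set_option linter.unusedSectionVars false

variable {E : Type*} [NormedAddCommGroup E] [InnerProductSpace ℂ E] [FiniteDimensional ℂ E]

lemma gs_diag_sq {k : ℕ} (g : Fin k → E) (m : Fin k) :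
    ‖⟪g m, gramSchmidtTuple g m⟫_ℂ‖ ^ 2
      = ‖g m‖^2 - ‖(orthogonalProjection (span ℂ (g '' Set.Iio m)) (g m) : E)‖^2 := by
  haveI : WellFoundedLT (Fin k) := Finite.to_wellFoundedLT
  set V := span ℂ (g '' Set.Iio m) with hV
  set u := @gramSchmidt ℂ E _ _ _ (Fin k) _ _ Finite.to_wellFoundedLT g m with hu
  have hu_orth : u ∈ Vᗮ := by
    have hle : V ≤ (ℂ ∙ u)ᗮ := by
      rw [hV, span_le]
      rintro w ⟨i, hi, rfl⟩
      rw [SetLike.mem_coe, mem_orthogonal_singleton_iff_inner_right]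
      exact gramSchmidt_inv_triangular ℂ g hi
    exact Submodule.orthogonal_le hle
      ((ℂ ∙ u).le_orthogonal_orthogonal (mem_span_singleton_self u))
  have hdiff : g m - u ∈ V := by
    have hsum : g m - u
        = ∑ i ∈ Finset.Iio m, (orthogonalProjection (ℂ ∙ gramSchmidt ℂ g i) (g m) : E) := by
      rw [hu, gramSchmidt_def ℂ g m]; abel
    rw [hsum]
    refine Submodule.sum_mem _ fun i hi => ?_
    have hgs : gramSchmidt ℂ g i ∈ V := by
      have h1 := gramSchmidt_mem_span ℂ g (le_refl i)
      refine span_mono ?_ h1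
      exact Set.image_mono fun x hx => lt_of_le_of_lt hx (Finset.mem_Iio.1 hi)
    exact (span_singleton_le_iff_mem _ _).2 hgs (orthogonalProjection _ (g m)).2
  have hproj : (orthogonalProjection Vᗮ (g m) : E) = u := by
    refine eq_starProjection_of_mem_orthogonal' (K := Vᗮ) hu_orth
      (V.le_orthogonal_orthogonal hdiff) ?_
    abel
  have hpyth : ‖u‖^2 = ‖g m‖^2 - ‖(orthogonalProjection V (g m) : E)‖^2 := by
    have h0 := norm_sq_eq_add_norm_sq_projection (g m) V
    have h4 : ‖(orthogonalProjection Vᗮ) (g m)‖ = ‖u‖ := by rw [← hproj]; rfl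
    rw [h4] at h0
    have h5 : ‖(orthogonalProjection V) (g m)‖ = ‖(orthogonalProjection V (g m) : E)‖ := rfl
    rw [h5] at h0
    linarith
  have hinner : ⟪g m, gramSchmidtTuple g m⟫_ℂ = (‖u‖ : ℂ) := by
    have h1 : gramSchmidtTuple g m = ((‖u‖ : ℂ))⁻¹ • u := rfl
    have h2 : ⟪g m, u⟫_ℂ = ((‖u‖^2 : ℝ) : ℂ) := by
      have hz : ⟪g m - u, u⟫_ℂ = 0 := (V.mem_orthogonal u).1 hu_orth _ hdiff
      have h3 : ⟪g m, u⟫_ℂ = ⟪g m - u, u⟫_ℂ + ⟪u, u⟫_ℂ := by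
        rw [← inner_add_left, sub_add_cancel]
      rw [h3, hz, zero_add, inner_self_eq_norm_sq_to_K]
      norm_cast
    rw [h1, inner_smul_right, h2]
    rcases eq_or_ne u 0 with h | h
    · simp [h]
    · have hne : (‖u‖ : ℂ) ≠ 0 := by
        simpa using norm_ne_zero_iff.2 h
      field_simp
      push_cast
      ring
  rw [hinner, Complex.norm_real, norm_norm]
  exact hpyth

lemma bessel_bound {n : ℕ} (f : Fin n → E) (B : ℝ) (hB : 0 ≤ B)
    (hup : ∀ a : Fin n → ℂ, ‖∑ i, a i • f i‖ ^ 2 ≤ B ^ 2 * ∑ i, ‖a i‖ ^ 2)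
    (y : E) : ∑ i, ‖⟪f i, y⟫_ℂ‖ ^ 2 ≤ B ^ 2 * ‖y‖ ^ 2 := by
  set c : Fin n → ℂ := fun i => ⟪f i, y⟫_ℂ with hc
  set z : E := ∑ i, c i • f i with hz
  set s : ℝ := ∑ i, ‖c i‖ ^ 2 with hs
  have hs0 : 0 ≤ s := Finset.sum_nonneg fun i _ => sq_nonneg _
  have hinner : ⟪z, y⟫_ℂ = (s : ℂ) := by
    rw [hz, sum_inner]
    simp_rw [inner_smul_left]
    rw [hs]
    push_cast
    refine Finset.sum_congr rfl fun i _ => ?_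
    rw [hc, RCLike.conj_mul]
    norm_cast
  have h1 : s ≤ ‖z‖ * ‖y‖ := by
    calc s = ‖⟪z, y⟫_ℂ‖ := by rw [hinner]; simp [abs_of_nonneg hs0]
    _ ≤ ‖z‖ * ‖y‖ := norm_inner_le_norm _ _
  have h2 : ‖z‖ ^ 2 ≤ B ^ 2 * s := hup c
  rcases eq_or_lt_of_le hs0 with h | h
  · rw [← h]; positivity
  · nlinarith [norm_nonneg z, norm_nonneg y, sq_nonneg (‖z‖ - B * ‖y‖)]


lemma exists_coeffs {n : ℕ} (f : Fin n → E) (S : Finset (Fin n)) {x : E}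
    (hx : x ∈ span ℂ (f '' ↑S)) :
    ∃ a : Fin n → ℂ, (∀ i ∉ S, a i = 0) ∧ ∑ i, a i • f i = x := by
  rw [Finsupp.mem_span_image_iff_linearCombination] at hx
  obtain ⟨l, hl, hlx⟩ := hx
  refine ⟨fun i => l i, fun i hi => ?_, ?_⟩
  · by_contra h
    exact hi (hl (Finsupp.mem_support_iff.2 h))
  · rw [← hlx, Finsupp.linearCombination_apply, Finsupp.sum_fintype]
    intro i; rw [zero_smul]


lemma proj_bound {n : ℕ} (f : Fin n → E) (A : ℝ) (hA : 0 < A)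
    (hlow : ∀ a : Fin n → ℂ, A ^ 2 * ∑ i, ‖a i‖ ^ 2 ≤ ‖∑ i, a i • f i‖ ^ 2)
    (S : Finset (Fin n)) (y : E) :
    A ^ 2 * ‖(orthogonalProjection (span ℂ (f '' ↑S)) y : E)‖ ^ 2
      ≤ ∑ i ∈ S, ‖⟪f i, y⟫_ℂ‖ ^ 2 := by
  set K := span ℂ (f '' ↑S) with hK
  set p : E := (orthogonalProjection K y : E) with hp
  have hpK : p ∈ K := by rw [hp]; exact (orthogonalProjection K y).2
  obtain ⟨a, ha0, hap⟩ := exists_coeffs f S hpK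
  set t : ℝ := ∑ i ∈ S, ‖⟪f i, y⟫_ℂ‖ ^ 2 with ht
  set s : ℝ := ∑ i, ‖a i‖ ^ 2 with hs
  set M : ℝ := ∑ i ∈ S, ‖a i‖ * ‖⟪f i, y⟫_ℂ‖ with hM
  have ht0 : 0 ≤ t := Finset.sum_nonneg fun i _ => sq_nonneg _
  have hs0 : 0 ≤ s := Finset.sum_nonneg fun i _ => sq_nonneg _
  have hM0 : 0 ≤ M := Finset.sum_nonneg fun i _ =>
    mul_nonneg (norm_nonneg _) (norm_nonneg _)
  have hpy : ⟪p, y⟫_ℂ = ((‖p‖ ^ 2 : ℝ) : ℂ) := by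
    have h0 : ⟪y - p, p⟫_ℂ = 0 :=
      K.starProjection_inner_eq_zero y p (orthogonalProjection K y).2
    have h1 : ⟪p, y - p⟫_ℂ = 0 := by rw [← inner_conj_symm, h0, map_zero]
    have heq : p + (y - p) = y := by abel
    have h2 : ⟪p, y⟫_ℂ = ⟪p, p⟫_ℂ + ⟪p, y - p⟫_ℂ := by
      rw [← inner_add_right, heq]
    rw [h2, h1, add_zero, inner_self_eq_norm_sq_to_K]
    norm_cast
  have h4 : ‖p‖ ^ 2 ≤ M := by
    have h3 : ⟪p, y⟫_ℂ = ∑ i, (starRingEnd ℂ) (a i) * ⟪f i, y⟫_ℂ := by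
      rw [← hap, sum_inner]
      simp_rw [inner_smul_left]
    have h5 : (‖p‖ ^ 2 : ℝ) = Complex.re ⟪p, y⟫_ℂ := by rw [hpy, Complex.ofReal_re]
    have h7 : ‖⟪p, y⟫_ℂ‖ ≤ ∑ i, ‖a i‖ * ‖⟪f i, y⟫_ℂ‖ := by
      rw [h3]
      refine (norm_sum_le _ _).trans ?_
      refine Finset.sum_le_sum fun i _ => ?_
      rw [norm_mul, RCLike.norm_conj]
    have h8 : ∑ i, ‖a i‖ * ‖⟪f i, y⟫_ℂ‖ = M := by
      rw [hM]
      refine (Finset.sum_subset (Finset.subset_univ S) ?_).symm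
      intro i _ hi
      rw [ha0 i hi, norm_zero, zero_mul]
    rw [h5]
    exact (Complex.re_le_norm _).trans (h7.trans_eq h8)
  have hM2 : M ^ 2 ≤ s * t := by
    have := Finset.sum_mul_sq_le_sq_mul_sq S (fun i => ‖a i‖) (fun i => ‖⟪f i, y⟫_ℂ‖)
    have hss : ∑ i ∈ S, ‖a i‖ ^ 2 = s := by
      rw [hs]
      refine Finset.sum_subset (Finset.subset_univ S) ?_
      intro i _ hi
      rw [ha0 i hi, norm_zero]; ring
    rw [hM, ← hss, ht]
    exact this
  have hls : A ^ 2 * s ≤ ‖p‖ ^ 2 := by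
    have := hlow a
    rw [hap] at this
    rw [hs]
    exact this
  rcases eq_or_lt_of_le (by positivity : (0:ℝ) ≤ ‖p‖ ^ 2) with h | h
  · rw [← h]; linarith
  · nlinarith [sq_nonneg (‖p‖^2 - M), mul_le_mul_of_nonneg_right hls ht0,
      mul_le_mul_of_nonneg_right h4 hM0]

noncomputable def greedyColor {n : ℕ} (f : Fin n → E) {r : ℕ} (hr : 0 < r) (i : Fin n) :
    Fin r :=
  (Finset.exists_min_image Finset.univ
    (fun j : Fin r =>
      ‖(orthogonalProjection
          (span ℂ (f '' {i' : Fin n | ∃ _h : i' < i, greedyColor f hr i' = j}))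
          (f i) : E)‖)
    ⟨⟨0, hr⟩, Finset.mem_univ _⟩).choose
termination_by i.1
decreasing_by all_goals exact _h


lemma greedyColor_spec {n : ℕ} (f : Fin n → E) {r : ℕ} (hr : 0 < r) (i : Fin n) (j : Fin r) :
    ‖(orthogonalProjection
        (span ℂ (f '' {i' : Fin n | i' < i ∧ greedyColor f hr i' = greedyColor f hr i}))
        (f i) : E)‖
      ≤ ‖(orthogonalProjection
        (span ℂ (f '' {i' : Fin n | i' < i ∧ greedyColor f hr i' = j}))
        (f i) : E)‖ := by
  have hsets : ∀ j' : Fin r, {i' : Fin n | ∃ _h : i' < i, greedyColor f hr i' = j'}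
      = {i' : Fin n | i' < i ∧ greedyColor f hr i' = j'} := by
    intro j'; ext i'; simp [exists_prop]
  have hspec := (Finset.exists_min_image Finset.univ
    (fun j : Fin r =>
      ‖(orthogonalProjection
          (span ℂ (f '' {i' : Fin n | ∃ _h : i' < i, greedyColor f hr i' = j}))
          (f i) : E)‖)
    ⟨⟨0, hr⟩, Finset.mem_univ _⟩).choose_spec.2 j (Finset.mem_univ _)
  have hch : greedyColor f hr i = (Finset.exists_min_image Finset.univ
    (fun j : Fin r =>
      ‖(orthogonalProjection
          (span ℂ (f '' {i' : Fin n | ∃ _h : i' < i, greedyColor f hr i' = j}))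
          (f i) : E)‖)
    ⟨⟨0, hr⟩, Finset.mem_univ _⟩).choose := by
    rw [greedyColor]
  rw [← hch] at hspec
  rw [hsets j, hsets (greedyColor f hr i)] at hspec
  exact hspec

lemma greedy_min_bound {n : ℕ} (f : Fin n → E) (A B : ℝ) (hA : 0 < A) (hB : 0 ≤ B)
    {r : ℕ} (hr : 0 < r)
    (hlow : ∀ a : Fin n → ℂ, A ^ 2 * ∑ i, ‖a i‖ ^ 2 ≤ ‖∑ i, a i • f i‖ ^ 2)
    (hup : ∀ a : Fin n → ℂ, ‖∑ i, a i • f i‖ ^ 2 ≤ B ^ 2 * ∑ i, ‖a i‖ ^ 2)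
    (i : Fin n) :
    (A ^ 2 * r) * ‖(orthogonalProjection
        (span ℂ (f '' {i' : Fin n | i' < i ∧ greedyColor f hr i' = greedyColor f hr i}))
        (f i) : E)‖ ^ 2 ≤ B ^ 2 * ‖f i‖ ^ 2 := by
  set c := greedyColor f hr with hc
  set P : Fin r → ℝ := fun j =>
    ‖(orthogonalProjection (span ℂ (f '' {i' : Fin n | i' < i ∧ c i' = j})) (f i) : E)‖
    with hP
  set T : Fin r → Finset (Fin n) :=
    fun j => Finset.univ.filter (fun i' => i' < i ∧ c i' = j) with hT
  have hcoe : ∀ j, (↑(T j) : Set (Fin n)) = {i' : Fin n | i' < i ∧ c i' = j} := by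
    intro j; ext i'; simp [hT]
  have hPj : ∀ j, A ^ 2 * (P j) ^ 2 ≤ ∑ k ∈ T j, ‖⟪f k, f i⟫_ℂ‖ ^ 2 := by
    intro j
    have := proj_bound f A hA hlow (T j) (f i)
    rwa [hcoe j] at this
  have hmin : ∀ j, P (c i) ≤ P j := fun j => greedyColor_spec f hr i j
  have hP0 : ∀ j, 0 ≤ P j := fun j => norm_nonneg _
  have hsum : ∑ j, ∑ k ∈ T j, ‖⟪f k, f i⟫_ℂ‖ ^ 2 ≤ B ^ 2 * ‖f i‖ ^ 2 := by
    have hfib : ∑ j, ∑ k ∈ T j, ‖⟪f k, f i⟫_ℂ‖ ^ 2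
        = ∑ k ∈ Finset.univ.filter (fun i' => i' < i), ‖⟪f k, f i⟫_ℂ‖ ^ 2 := by
      rw [← Finset.sum_fiberwise_of_maps_to (g := c)
        (fun x hx => Finset.mem_univ (c x))]
      refine Finset.sum_congr rfl fun j _ => ?_
      refine Finset.sum_congr ?_ fun _ _ => rfl
      ext i'
      simp [hT, and_comm]
    rw [hfib]
    refine le_trans ?_ (bessel_bound f B hB hup (f i))
    refine Finset.sum_le_sum_of_subset_of_nonneg (Finset.subset_univ _) ?_
    intro k _ _; positivity
  calc (A ^ 2 * r) * P (c i) ^ 2 = ∑ _j : Fin r, A ^ 2 * P (c i) ^ 2 := by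
        rw [Finset.sum_const, Finset.card_univ, Fintype.card_fin, nsmul_eq_mul]; ring
    _ ≤ ∑ j : Fin r, A ^ 2 * P j ^ 2 := by
        refine Finset.sum_le_sum fun j _ => ?_
        have := pow_le_pow_left₀ (hP0 (c i)) (hmin j) 2
        nlinarith [sq_nonneg A]
    _ ≤ ∑ j, ∑ k ∈ T j, ‖⟪f k, f i⟫_ℂ‖ ^ 2 := Finset.sum_le_sum fun j _ => hPj j
    _ ≤ B ^ 2 * ‖f i‖ ^ 2 := hsum

end Aux

/-- Step 4: if `{f_i}_{i=1}^n` is a unit norm Riesz basis for `ℓ₂ⁿ` with bounds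
`0 < A ≤ B` and `r ≥ 1`, there is a partition `{A_1,…,A_r}` of `{1,…,n}` (encoded by a
coloring `c`, with `A_j = {i | c i = j}`) such that for each `j`, writing
`A_j = {i_1 < ⋯ < i_k}` and letting `{e_{i_1},…,e_{i_k}}` be the Gram–Schmidt
orthonormalization of `(f_{i_1},…,f_{i_k})`, one has
`|⟨f_{i_m}, e_{i_m}⟩|² ≥ 1 − B⁴/(A⁴ r)` for every `m`. -/
theorem exists_partition_gramSchmidt_diagonal_large {n : ℕ}
    (f : Fin n → EuclideanSpace ℂ (Fin n)) (A B : ℝ) (r : ℕ)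
    (hA : 0 < A) (hAB : A ≤ B) (hr : 1 ≤ r)
    (hnorm : ∀ i, ‖f i‖ = 1)
    (hspan : Submodule.span ℂ (Set.range f) = ⊤)
    (hriesz : ∀ a : Fin n → ℂ,
      A ^ 2 * ∑ i, ‖a i‖ ^ 2 ≤ ‖∑ i, a i • f i‖ ^ 2 ∧
      ‖∑ i, a i • f i‖ ^ 2 ≤ B ^ 2 * ∑ i, ‖a i‖ ^ 2) :
    ∃ c : Fin n → Fin r, ∀ j : Fin r, ∀ k : ℕ,
      ∀ hcard : (Finset.univ.filter (fun i => c i = j)).card = k,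
      ∀ m : Fin k,
        1 - B ^ 4 / (A ^ 4 * r) ≤
          ‖⟪f ((Finset.univ.filter (fun i => c i = j)).orderIsoOfFin hcard m),
            gramSchmidtTuple (fun t : Fin k =>
              f ((Finset.univ.filter (fun i => c i = j)).orderIsoOfFin hcard t)) m⟫_ℂ‖ ^ 2 := by
  have hr0 : 0 < r := hr
  have hB0 : 0 ≤ B := le_trans hA.le hAB
  refine ⟨greedyColor f hr0, ?_⟩
  intro j k hcard m
  set c := greedyColor f hr0 with hc
  set S := Finset.univ.filter (fun i => c i = j) with hS
  set e := S.orderIsoOfFin hcard with he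
  set i : Fin n := (e m : Fin n) with hi
  set g : Fin k → EuclideanSpace ℂ (Fin n) := fun t => f (e t) with hg
  have hci : c i = j := by
    have h1 : (e m : Fin n) ∈ S := (e m).2
    exact (Finset.mem_filter.1 h1).2
  have hset : g '' Set.Iio m = f '' {i' : Fin n | i' < i ∧ c i' = j} := by
    ext x
    constructor
    · rintro ⟨t, ht, rfl⟩
      refine ⟨(e t : Fin n), ⟨?_, ?_⟩, rfl⟩
      · exact Subtype.coe_lt_coe.2 (e.lt_iff_lt.2 ht)
      · have h1 : (e t : Fin n) ∈ S := (e t).2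
        exact (Finset.mem_filter.1 h1).2
    · rintro ⟨i', ⟨hlt, hcj⟩, rfl⟩
      have hi'S : i' ∈ S := Finset.mem_filter.2 ⟨Finset.mem_univ _, hcj⟩
      refine ⟨e.symm ⟨i', hi'S⟩, ?_, ?_⟩
      · have h2 : (⟨i', hi'S⟩ : {x // x ∈ S}) < e m := Subtype.coe_lt_coe.1 hlt
        have h3 := e.lt_iff_lt.1 (by rwa [e.apply_symm_apply] : e (e.symm ⟨i', hi'S⟩) < e m)
        exact h3
      · rw [hg]; simp only [e.apply_symm_apply]
  have key := greedy_min_bound f A B hA hB0 hr0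
    (fun a => (hriesz a).1) (fun a => (hriesz a).2) i
  rw [← hc, hci, hnorm i] at key
  have hdiag := gs_diag_sq g m
  rw [hset] at hdiag
  have hgm : g m = f i := rfl
  rw [hgm, hnorm i] at hdiag
  set q : ℝ := ‖(orthogonalProjection
      (span ℂ (f '' {i' : Fin n | i' < i ∧ c i' = j})) (f i) :
        EuclideanSpace ℂ (Fin n))‖ ^ 2 with hq
  have hq0 : 0 ≤ q := sq_nonneg _
  have hkey : A ^ 2 * r * q ≤ B ^ 2 := by
    calc A ^ 2 * r * q ≤ B ^ 2 * 1 ^ 2 := key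
    _ = B ^ 2 := by ring
  have hgoal : q ≤ B ^ 4 / (A ^ 4 * r) := by
    rw [le_div_iff₀ (by positivity)]
    have hA2B2 : A ^ 2 ≤ B ^ 2 := by nlinarith
    have hrpos : (0:ℝ) < r := by exact_mod_cast hr0
    nlinarith [mul_le_mul_of_nonneg_right hkey (sq_nonneg A),
      mul_le_mul_of_nonneg_left hA2B2 (sq_nonneg B)]
  rw [hdiag]
  linarith
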